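/- The abelianization of the elementary palindromic automorphism group EΠA(F_n), presented with generators (a_i||a_j) for i ≠ j and relations (1) (a_i||a_k)(a_j||a_k)=(a_j||a_k)(a_i||a_k), (2) (a_i||a_k)(a_j||a_l)=(a_j||a_l)(a_i||a_k), (3) (a_i||a_k)(a_j||a_k)(a_i||a_j)=(a_i||a_j)(a_j||a_k)(a_i||a_k)^{-1}, is an elementary abelian 2-group of rank n(n−1). -/

import Mathlib

/-- The index set of generators `(a_i||a_j)`, `i ≠ j`, of `EΠA(F_n)`. -/
def PalIdx (n : ℕ) : Type := {p : Fin n × Fin n // p.1 ≠ p.2}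

/-- The generator `(a_i||a_j)` of the free group on `PalIdx n`. -/
def palGen {n : ℕ} {i j : Fin n} (h : i ≠ j) : FreeGroup (PalIdx n) :=
  FreeGroup.of ⟨(i, j), h⟩

/-- Collins' defining relators for `EΠA(F_n)`: with `A = (a_i||a_k)`, `B = (a_j||a_k)`,
`C = (a_i||a_j)` and `i, j, k, l` pairwise distinct,
(1) `A B A⁻¹ B⁻¹`, (2) `(a_i||a_k)(a_j||a_l)(a_i||a_k)⁻¹(a_j||a_l)⁻¹`,
(3) `A B C (C B A⁻¹)⁻¹ = A B C A B⁻¹ C⁻¹`. -/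
def palRels (n : ℕ) : Set (FreeGroup (PalIdx n)) :=
  { w | (∃ (i j k : Fin n) (hik : i ≠ k) (hjk : j ≠ k), i ≠ j ∧
          w = palGen hik * palGen hjk * (palGen hik)⁻¹ * (palGen hjk)⁻¹)
      ∨ (∃ (i j k l : Fin n) (hik : i ≠ k) (hjl : j ≠ l),
          i ≠ j ∧ i ≠ l ∧ j ≠ k ∧ k ≠ l ∧
          w = palGen hik * palGen hjl * (palGen hik)⁻¹ * (palGen hjl)⁻¹)
      ∨ (∃ (i j k : Fin n) (hik : i ≠ k) (hjk : j ≠ k) (hij : i ≠ j),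
          w = palGen hik * palGen hjk * palGen hij *
              palGen hik * (palGen hjk)⁻¹ * (palGen hij)⁻¹) }

instance (n : ℕ) : Fintype (PalIdx n) := by unfold PalIdx; infer_instance

lemma palIdx_card (n : ℕ) : Fintype.card (PalIdx n) = n * (n - 1) := by
  have e : {p : Fin n × Fin n // p.1 = p.2} ≃ Fin n :=
    ⟨fun p => p.1.1, fun i => ⟨(i, i), rfl⟩, fun p => Subtype.ext (Prod.ext rfl p.2),
      fun i => rfl⟩
  have hdiag : Fintype.card {p : Fin n × Fin n // p.1 = p.2} = n := by
    rw [Fintype.card_congr e, Fintype.card_fin]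
  have h0 : Fintype.card (PalIdx n) = Fintype.card {p : Fin n × Fin n // ¬ p.1 = p.2} := rfl
  rw [h0, Fintype.card_subtype_compl, hdiag, Fintype.card_prod, Fintype.card_fin]
  cases n with
  | zero => simp
  | succ m =>
    rw [Nat.succ_sub_one]
    exact Nat.sub_eq_of_eq_add (by ring)

lemma commGroup_aux {G : Type*} [CommGroup G] (a b c : G)
    (h : a * b * c * a * b⁻¹ * c⁻¹ = 1) : a * a = 1 := by
  have : a * b * c * a * b⁻¹ * c⁻¹ = a * a := by
    simp [mul_comm, mul_left_comm, mul_assoc]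
  rwa [this] at h

lemma commGroup_aux2 {G : Type*} [CommGroup G] (a b c : G)
    (h : a * a = 1) : a * b * c * a * b⁻¹ * c⁻¹ = 1 := by
  have h2 : a * b * c * a * b⁻¹ * c⁻¹ = a * a := by
    simp [mul_comm, mul_left_comm, mul_assoc]
  rw [h2, h]

lemma T_sq {ι : Type*} (x : Multiplicative (ι → ZMod 2)) : x * x = 1 := by
  have : Multiplicative.toAdd x + Multiplicative.toAdd x = 0 := by
    funext p
    exact CharTwo.add_self_eq_zero _
  calc x * x = Multiplicative.ofAdd (Multiplicative.toAdd x + Multiplicative.toAdd x) := rfl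
  _ = 1 := by rw [this]; rfl

/-- The abelianization of the elementary palindromic automorphism group
`EΠA(F_n)`, given by Collins' presentation, is an elementary abelian 2-group of rank
`n (n - 1)`. -/
theorem abelianization_EPiA (n : ℕ) (hn : 3 ≤ n) :
    Nonempty (Abelianization (PresentedGroup (palRels n)) ≃*
      Multiplicative (Fin (n * (n - 1)) → ZMod 2)) := by
  classical
  set G := Abelianization (PresentedGroup (palRels n)) with hG
  set T := Multiplicative (PalIdx n → ZMod 2) with hT
  -- basic generators in G
  set g : PalIdx n → G := fun p => Abelianization.of (PresentedGroup.of p) with hg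
  -- the map F from the free group to G
  set F : FreeGroup (PalIdx n) →* G :=
    Abelianization.of.comp (PresentedGroup.mk (palRels n)) with hF
  have hFof : ∀ p : PalIdx n, F (FreeGroup.of p) = g p := fun p => rfl
  have hFrel : ∀ r ∈ palRels n, F r = 1 := by
    intro r hr
    have h1 : PresentedGroup.mk (palRels n) r = 1 :=
      (QuotientGroup.eq_one_iff r).mpr (Subgroup.subset_normalClosure hr)
    simp [hF, MonoidHom.comp_apply, h1]
  -- every generator squares to 1 in G
  have hsq : ∀ p : PalIdx n, g p * g p = 1 := by
    intro p
    obtain ⟨⟨i, k⟩, hik⟩ := p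
    -- find j distinct from i and k
    have hcard : ({i, k} : Finset (Fin n)).card ≤ 2 :=
      (Finset.card_insert_le _ _).trans (by simp)
    have hne : (({i, k} : Finset (Fin n))ᶜ).Nonempty := by
      rw [← Finset.card_pos, Finset.card_compl, Fintype.card_fin]
      omega
    obtain ⟨j, hj⟩ := hne
    rw [Finset.mem_compl, Finset.mem_insert, Finset.mem_singleton] at hj
    push_neg at hj
    have hji : j ≠ i := hj.1
    have hjk : j ≠ k := hj.2
    have hij : i ≠ j := hji.symm
    have hrmem : palGen hik * palGen hjk * palGen hij *
        palGen hik * (palGen hjk)⁻¹ * (palGen hij)⁻¹ ∈ palRels n :=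
      Or.inr (Or.inr ⟨i, j, k, hik, hjk, hij, rfl⟩)
    have h1 := hFrel _ hrmem
    simp only [map_mul, map_inv, palGen, hFof] at h1
    exact commGroup_aux _ _ _ h1
  -- forward map φ : G →* T
  have frel : ∀ r ∈ palRels n,
      FreeGroup.lift (fun p : PalIdx n =>
        (Multiplicative.ofAdd (Pi.single p (1 : ZMod 2)) : T)) r = 1 := by
    intro r hr
    set f := fun p : PalIdx n =>
      (Multiplicative.ofAdd (Pi.single p (1 : ZMod 2)) : T) with hf
    rcases hr with ⟨i, j, k, hik, hjk, hij, rfl⟩ |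
      ⟨i, j, k, l, hik, hjl, hij, hil, hjk, hkl, rfl⟩ |
      ⟨i, j, k, hik, hjk, hij, rfl⟩ <;>
      simp only [map_mul, map_inv, palGen, FreeGroup.lift_apply_of]
    · simp [mul_comm, mul_left_comm, mul_assoc]
    · simp [mul_comm, mul_left_comm, mul_assoc]
    · exact commGroup_aux2 _ _ _ (T_sq _)
  set φ : G →* T := Abelianization.lift (PresentedGroup.toGroup frel) with hφ
  have hφg : ∀ p : PalIdx n, φ (g p) = Multiplicative.ofAdd (Pi.single p (1 : ZMod 2)) := by
    intro p
    show Abelianization.lift (PresentedGroup.toGroup frel)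
        (Abelianization.of (PresentedGroup.of p)) = _
    rw [Abelianization.lift_apply_of, PresentedGroup.toGroup.of]
  -- backward map ψ : T →* G
  have key : ∀ (p : PalIdx n) (a b : ZMod 2), g p ^ (a + b).val = g p ^ a.val * g p ^ b.val := by
    intro p a b
    have h2 : g p ^ 2 = 1 := by rw [pow_two]; exact hsq p
    rw [← pow_add, ZMod.val_add, ← pow_eq_pow_mod _ h2]
  have hψmul : ∀ x y : T, (∏ p : PalIdx n, g p ^ (Multiplicative.toAdd (x * y) p).val)
      = (∏ p : PalIdx n, g p ^ (Multiplicative.toAdd x p).val) *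
        (∏ p : PalIdx n, g p ^ (Multiplicative.toAdd y p).val) := by
    intro x y
    have h1 : ∀ p ∈ Finset.univ, g p ^ (Multiplicative.toAdd (x * y) p).val
        = g p ^ (Multiplicative.toAdd x p).val * g p ^ (Multiplicative.toAdd y p).val := by
      intro p _
      show g p ^ (Multiplicative.toAdd x p + Multiplicative.toAdd y p).val = _
      exact key p _ _
    rw [Finset.prod_congr rfl h1, Finset.prod_mul_distrib]
  set ψ : T →* G :=
    { toFun := fun x => ∏ p : PalIdx n, g p ^ (Multiplicative.toAdd x p).val
      map_one' := by simp
      map_mul' := hψmul } with hψ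
  have hψg : ∀ p : PalIdx n, ψ (Multiplicative.ofAdd (Pi.single p (1 : ZMod 2))) = g p := by
    intro p
    show (∏ q : PalIdx n, g q ^ ((Pi.single p (1 : ZMod 2) : PalIdx n → ZMod 2) q).val) = g p
    rw [Finset.prod_eq_single p]
    · rw [Pi.single_eq_same]
      have h1 : (1 : ZMod 2).val = 1 := rfl
      rw [h1, pow_one]
    · intro q _ hq
      rw [Pi.single_eq_of_ne hq]
      rfl
    · simp
  -- ψ ∘ φ = id
  have h1 : ψ.comp φ = MonoidHom.id G := by
    apply Abelianization.hom_ext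
    have : (ψ.comp φ).comp Abelianization.of = (MonoidHom.id G).comp Abelianization.of →
        (ψ.comp φ).comp (Abelianization.of : PresentedGroup (palRels n) →* G)
          = (MonoidHom.id G).comp Abelianization.of := id
    apply PresentedGroup.ext
    intro p
    simp only [MonoidHom.comp_apply, MonoidHom.id_apply]
    show ψ (φ (g p)) = g p
    rw [hφg, hψg]
  -- φ ∘ ψ = id
  have h2 : φ.comp ψ = MonoidHom.id T := by
    refine MonoidHom.ext fun x => ?_
    simp only [MonoidHom.comp_apply, MonoidHom.id_apply]
    show φ (∏ p : PalIdx n, g p ^ (Multiplicative.toAdd x p).val) = x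
    rw [map_prod]
    have : ∀ p : PalIdx n, φ (g p ^ (Multiplicative.toAdd x p).val)
        = Multiplicative.ofAdd ((Multiplicative.toAdd x p).val • Pi.single p (1 : ZMod 2)) := by
      intro p
      rw [map_pow, hφg]
      rfl
    rw [Finset.prod_congr rfl (fun p _ => this p)]
    have : (∑ p : PalIdx n, (Multiplicative.toAdd x p).val • Pi.single p (1 : ZMod 2))
        = Multiplicative.toAdd x := by
      funext q
      rw [Finset.sum_apply]
      rw [Finset.sum_eq_single q]
      · simp [ZMod.natCast_val, ZMod.cast_id]
      · intro p _ hp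
        simp [Pi.single_eq_of_ne (Ne.symm hp)]
      · simp
    calc (∏ p : PalIdx n,
          Multiplicative.ofAdd ((Multiplicative.toAdd x p).val • Pi.single p (1 : ZMod 2)))
        = Multiplicative.ofAdd
            (∑ p : PalIdx n, (Multiplicative.toAdd x p).val • Pi.single p (1 : ZMod 2)) := by
          rw [ofAdd_sum]
      _ = x := by rw [this]; rfl
  have e1 : G ≃* T := MonoidHom.toMulEquiv φ ψ h1 h2
  -- reindexing
  have ecard : PalIdx n ≃ Fin (n * (n - 1)) := by
    apply Fintype.equivFinOfCardEq
    exact palIdx_card n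
  have e2 : T ≃* Multiplicative (Fin (n * (n - 1)) → ZMod 2) :=
    AddEquiv.toMultiplicative
      { Equiv.piCongrLeft' (fun _ => ZMod 2) ecard with
        map_add' := fun x y => rfl }
  exact ⟨e1.trans e2⟩
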